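/- (Parametric Poincaré–Miranda) Let n ≥ 1 and f = (f₁,…,f_n) : [0,1]^n × [0,1] → ℝ^n be continuous with f_i ≥ 0 on {x : x_i = 0} × [0,1] and f_i ≤ 0 on {x : x_i = 1} × [0,1] for each i. Then there exists a connected subset W of f⁻¹({0}) with W ∩ ([0,1]^n × {0}) ≠ ∅ and W ∩ ([0,1]^n × {1}) ≠ ∅. -/

import Mathlib

def unitCube (n : ℕ) : Set (Fin n → ℝ) := Set.Icc 0 1

def face (n : ℕ) (i : Fin n) (v : ℝ) : Set (Fin n → ℝ) := {x ∈ unitCube n | x i = v}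

/-- `A` connects the `i`-th opposite faces of the unit cube: some connected subset of `A`
meets both faces. -/
def Connects (n : ℕ) (i : Fin n) (A : Set (Fin n → ℝ)) : Prop :=
  ∃ S ⊆ A, IsPreconnected S ∧ (S ∩ face n i 0).Nonempty ∧ (S ∩ face n i 1).Nonempty

/-- `A` separates the `i`-th opposite faces of the unit cube. -/
def Separates (n : ℕ) (i : Fin n) (A : Set (Fin n → ℝ)) : Prop :=
  ¬ Connects n i (unitCube n \ A)

/-- `U` is open in the subspace topology of the unit cube. -/
def OpenInCube (n : ℕ) (U : Set (Fin n → ℝ)) : Prop :=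
  ∃ V : Set (Fin n → ℝ), IsOpen V ∧ U = V ∩ unitCube n

namespace PM
open Finset


def vtx {M k : ℕ} (y : Fin M → Fin k) (π : Equiv.Perm (Fin M)) (j : Fin (M+1)) :
    Fin M → ℕ :=
  fun i => (y i : ℕ) + (if ((π.symm i : ℕ) < (j : ℕ)) then 1 else 0)

lemma vtx_le {M k : ℕ} (y : Fin M → Fin k) (π : Equiv.Perm (Fin M)) (j : Fin (M+1))
    (i : Fin M) : vtx y π j i ≤ k := by
  have := (y i).isLt
  unfold vtx; split <;> omega

lemma vtx_sub_le {M k : ℕ} (y : Fin M → Fin k) (π : Equiv.Perm (Fin M)) (j j' : Fin (M+1))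
    (i : Fin M) : vtx y π j i ≤ vtx y π j' i + 1 := by
  unfold vtx; split <;> split <;> omega

def IsPan {M k : ℕ} (ℓ : (Fin M → ℕ) → Fin (M+1)) (y : Fin M → Fin k)
    (π : Equiv.Perm (Fin M)) : Prop :=
  Finset.image (fun j => ℓ (vtx y π j)) Finset.univ = Finset.univ

def IsDoor {M k : ℕ} (ℓ : (Fin M → ℕ) → Fin (M+1)) (y : Fin M → Fin k)
    (π : Equiv.Perm (Fin M)) (j : Fin (M+1)) : Prop :=
  (univ.erase j).image (fun t => ℓ (vtx y π t)) = univ.erase 0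

instance {M k : ℕ} (ℓ : (Fin M → ℕ) → Fin (M+1)) (y : Fin M → Fin k)
    (π : Equiv.Perm (Fin M)) : Decidable (IsPan ℓ y π) := by
  unfold IsPan; infer_instance

instance {M k : ℕ} (ℓ : (Fin M → ℕ) → Fin (M+1)) (y : Fin M → Fin k)
    (π : Equiv.Perm (Fin M)) (j : Fin (M+1)) : Decidable (IsDoor ℓ y π j) := by
  unfold IsDoor; infer_instance

/-- The pairing map on door incidences. -/
noncomputable def partner {m k : ℕ}
    (t : ((Fin (m+1) → Fin k) × Equiv.Perm (Fin (m+1))) × Fin (m+2)) :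
    ((Fin (m+1) → Fin k) × Equiv.Perm (Fin (m+1))) × Fin (m+2) :=
  if h0 : t.2 = 0 then
    if hb : (t.1.1 (t.1.2 0) : ℕ) + 1 < k then
      ((Function.update t.1.1 (t.1.2 0) ⟨(t.1.1 (t.1.2 0) : ℕ) + 1, hb⟩,
        t.1.2 * finRotate (m+1)), Fin.last (m+1))
    else t
  else if hl : t.2 = Fin.last (m+1) then
    ((Function.update t.1.1 (t.1.2 (Fin.last m))
        ⟨(t.1.1 (t.1.2 (Fin.last m)) : ℕ) - 1,
          by have := (t.1.1 (t.1.2 (Fin.last m))).isLt; omega⟩,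
      t.1.2 * (finRotate (m+1))⁻¹), 0)
  else
    ((t.1.1, t.1.2 *
        Equiv.swap (⟨(t.2 : ℕ) - 1, by have := t.2.isLt; omega⟩ : Fin (m+1))
          (⟨(t.2 : ℕ), by
            have h1 := t.2.isLt
            have h2 : (t.2 : ℕ) ≠ m + 1 := fun hc => hl (Fin.ext (by simp [hc]))
            omega⟩ : Fin (m+1))), t.2)



lemma even_card_of_invol {α : Type*} [DecidableEq α] (s : Finset α) (f : α → α)
    (h1 : ∀ a ∈ s, f a ∈ s) (h2 : ∀ a ∈ s, f (f a) = a) (h3 : ∀ a ∈ s, f a ≠ a) :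
    Even s.card := by
  classical
  induction s using Finset.strongInduction with
  | _ s ih =>
    rcases s.eq_empty_or_nonempty with rfl | ⟨a, ha⟩
    · simp
    · have hfa := h1 a ha
      have hne := h3 a ha
      set t := (s.erase a).erase (f a) with ht
      have hsub : t ⊂ s := by
        refine Finset.ssubset_of_subset_of_ssubset ?_ (Finset.erase_ssubset ha)
        exact Finset.erase_subset _ _
      have hts : ∀ x ∈ t, x ∈ s := fun x hx => Finset.mem_of_mem_erase (Finset.mem_of_mem_erase hx)
      have h1' : ∀ x ∈ t, f x ∈ t := by
        intro x hx
        have hxs := hts x hx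
        have hxa : x ≠ a := Finset.ne_of_mem_erase (Finset.mem_of_mem_erase hx)
        have hxfa : x ≠ f a := Finset.ne_of_mem_erase hx
        refine Finset.mem_erase.2 ⟨?_, Finset.mem_erase.2 ⟨?_, h1 x hxs⟩⟩
        · intro h; exact hxa (by rw [← h2 a ha, ← h, h2 x hxs])
        · intro h; exact hxfa (by rw [← h, h2 x hxs])
      have h2' : ∀ x ∈ t, f (f x) = x := fun x hx => h2 x (hts x hx)
      have h3' : ∀ x ∈ t, f x ≠ x := fun x hx => h3 x (hts x hx)
      have hcard : s.card = t.card + 2 := by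
        rw [ht, Finset.card_erase_of_mem, Finset.card_erase_of_mem ha]
        · have : 2 ≤ s.card := by
            have := Finset.one_lt_card.2 ⟨a, ha, f a, hfa, fun h => hne h.symm⟩
            omega
          omega
        · exact Finset.mem_erase.2 ⟨hne, hfa⟩
      rw [hcard]
      rcases ih t hsub h1' h2' h3' with ⟨c, hc⟩
      exact ⟨c + 1, by omega⟩

lemma door_count_parity {N : ℕ} (L : Fin (N+1) → Fin (N+1)) :
    (univ.filter fun j => (univ.erase j).image L = univ.erase 0).card % 2
      = (if Finset.image L univ = univ then 1 else 0) % 2 := by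
  classical
  by_cases hinj : Function.Injective L
  · have hsurj : Function.Surjective L := Finite.surjective_of_injective hinj
    have himg : Finset.image L univ = univ := by
      apply Finset.eq_univ_of_forall
      intro b; rcases hsurj b with ⟨a, rfl⟩; exact Finset.mem_image_of_mem _ (Finset.mem_univ a)
    rw [if_pos himg]
    obtain ⟨j0, hj0⟩ := hsurj 0
    have : (univ.filter fun j => (univ.erase j).image L = univ.erase 0) = {j0} := by
      ext j
      simp only [Finset.mem_filter, Finset.mem_univ, true_and, Finset.mem_singleton]
      constructor
      · intro hd
        by_contra hne
        have h0mem : (0 : Fin (N+1)) ∈ (univ.erase j).image L := by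
          refine Finset.mem_image.2 ⟨j0, Finset.mem_erase.2 ⟨fun h => hne h.symm, Finset.mem_univ _⟩, hj0⟩
        rw [hd] at h0mem
        exact (Finset.notMem_erase 0 _) h0mem
      · rintro rfl
        rw [Finset.image_erase hinj, himg, hj0]
    rw [this]; simp
  · have himg : ¬ (Finset.image L univ = univ) := by
      intro h
      apply hinj
      have : Set.InjOn L (univ : Finset (Fin (N+1))) := by
        rw [← Finset.card_image_iff, h]
      intro a b hab
      exact this (by simp) (by simp) hab
    rw [if_neg himg]
    rcases Function.not_injective_iff.1 hinj with ⟨a, b, hab, hne⟩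
    -- helper: a door and a collision member implies the twin is a door
    have swap_door : ∀ c d : Fin (N+1), L c = L d → c ≠ d →
        (univ.erase c).image L = univ.erase 0 → (univ.erase d).image L = univ.erase 0 := by
      intro c d hcd hcdne hd
      have : (univ.erase d).image L = (univ.erase c).image L := by
        apply Finset.Subset.antisymm
        · intro x hx
          rcases Finset.mem_image.1 hx with ⟨u, hu, rfl⟩
          rcases Finset.mem_erase.1 hu with ⟨hud, _⟩
          by_cases huc : u = c
          · subst huc
            exact Finset.mem_image.2 ⟨d, Finset.mem_erase.2 ⟨fun h => hcdne h.symm, Finset.mem_univ _⟩, hcd.symm⟩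
          · exact Finset.mem_image.2 ⟨u, Finset.mem_erase.2 ⟨huc, Finset.mem_univ _⟩, rfl⟩
        · intro x hx
          rcases Finset.mem_image.1 hx with ⟨u, hu, rfl⟩
          rcases Finset.mem_erase.1 hu with ⟨huc, _⟩
          by_cases hud : u = d
          · subst hud
            exact Finset.mem_image.2 ⟨c, Finset.mem_erase.2 ⟨hcdne, Finset.mem_univ _⟩, hcd⟩
          · exact Finset.mem_image.2 ⟨u, Finset.mem_erase.2 ⟨hud, Finset.mem_univ _⟩, rfl⟩
      rw [this, hd]
    -- any door must belong to every collision pair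
    have door_mem : ∀ j : Fin (N+1), (univ.erase j).image L = univ.erase 0 →
        ∀ c d : Fin (N+1), L c = L d → c ≠ d → j = c ∨ j = d := by
      intro j hd c d hcd hcdne
      by_contra hcon
      push_neg at hcon
      have hinjon : Set.InjOn L (univ.erase j : Finset (Fin (N+1))) := by
        rw [← Finset.card_image_iff, hd, Finset.card_erase_of_mem (Finset.mem_univ _),
          Finset.card_erase_of_mem (Finset.mem_univ _)]
      have hc : c ∈ (univ.erase j : Finset (Fin (N+1))) := Finset.mem_erase.2 ⟨fun h => hcon.1 h.symm, Finset.mem_univ _⟩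
      have hdm : d ∈ (univ.erase j : Finset (Fin (N+1))) := Finset.mem_erase.2 ⟨fun h => hcon.2 h.symm, Finset.mem_univ _⟩
      exact hcdne (hinjon hc hdm hcd)
    by_cases hex : ∃ j, (univ.erase j).image L = univ.erase 0
    · rcases hex with ⟨j, hj⟩
      have hdab : ((univ.erase a).image L = univ.erase 0) ∧ ((univ.erase b).image L = univ.erase 0) := by
        rcases door_mem j hj a b hab hne with h | h
        · rw [h] at hj; exact ⟨hj, swap_door a b hab hne hj⟩
        · rw [h] at hj; exact ⟨swap_door b a hab.symm (Ne.symm hne) hj, hj⟩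
      have : (univ.filter fun j' => (univ.erase j').image L = univ.erase 0) = {a, b} := by
        ext j'
        simp only [Finset.mem_filter, Finset.mem_univ, true_and, Finset.mem_insert, Finset.mem_singleton]
        constructor
        · intro hd'; exact door_mem j' hd' a b hab hne
        · rintro (rfl | rfl); exacts [hdab.1, hdab.2]
      rw [this, Finset.card_insert_of_notMem (by simpa using hne), Finset.card_singleton]
    · push_neg at hex
      rw [Finset.filter_false_of_mem (fun j _ => hex j)]
      simp

lemma mul_symm_apply {M : ℕ} (π σ : Equiv.Perm (Fin M)) (i : Fin M) :
    (π * σ).symm i = σ.symm (π.symm i) := by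
  simp [← Equiv.Perm.inv_def, mul_inv_rev, Equiv.Perm.mul_apply]

lemma vtx_swap {m k : ℕ} (y : Fin (m+1) → Fin k) (π : Equiv.Perm (Fin (m+1)))
    (p p' : Fin (m+1)) (j t : Fin (m+2)) (h0 : (j : ℕ) ≠ 0)
    (hp : (p : ℕ) + 1 = (j : ℕ)) (hp' : (p' : ℕ) = (j : ℕ)) (ht : (t : ℕ) ≠ (j : ℕ)) :
    vtx y (π * Equiv.swap p p') t = vtx y π t := by
  funext i
  unfold vtx
  have hs : (π * Equiv.swap p p').symm i = Equiv.swap p p' (π.symm i) := by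
    rw [mul_symm_apply, Equiv.symm_swap]
  rw [hs]
  have hiff : ((Equiv.swap p p' (π.symm i) : ℕ) < (t : ℕ)) ↔ ((π.symm i : ℕ) < (t : ℕ)) := by
    rcases eq_or_ne (π.symm i) p with hv | hv1
    · rw [hv, Equiv.swap_apply_left]; omega
    · rcases eq_or_ne (π.symm i) p' with hv | hv2
      · rw [hv, Equiv.swap_apply_right]; omega
      · rw [Equiv.swap_apply_of_ne_of_ne hv1 hv2]
  simp only [hiff]

lemma vtx_shift {m k : ℕ} (y : Fin (m+1) → Fin k) (π : Equiv.Perm (Fin (m+1)))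
    (hb : (y (π 0) : ℕ) + 1 < k) (t : Fin (m+1)) :
    vtx (Function.update y (π 0) ⟨(y (π 0) : ℕ) + 1, hb⟩) (π * finRotate (m+1)) t.castSucc
      = vtx y π t.succ := by
  funext i
  unfold vtx
  have hs : (π * finRotate (m+1)).symm i = (finRotate (m+1)).symm (π.symm i) :=
    mul_symm_apply _ _ _
  set v := π.symm i with hvdef
  set w := (finRotate (m+1)).symm v with hwdef
  have hfw : finRotate (m+1) w = v := Equiv.apply_symm_apply _ _
  rw [finRotate_succ_apply] at hfw
  have hval := Fin.val_add_one w
  rw [hfw] at hval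
  have hi : i = π v := by rw [hvdef, Equiv.apply_symm_apply]
  by_cases hw : w = Fin.last m
  · have hv0 : (v : ℕ) = 0 := by rw [hval, if_pos hw]
    have hv0' : v = 0 := Fin.ext hv0
    have hiπ0 : i = π 0 := by rw [hi, hv0']
    rw [hs, hiπ0, Function.update_self, hw]
    simp only [Fin.val_last, Fin.coe_castSucc, Fin.val_succ, hv0]
    have h1 : ¬ ((m : ℕ) < (t : ℕ)) := by have := t.isLt; omega
    rw [if_neg h1, if_pos (by omega)]
  · have hvw : (v : ℕ) = (w : ℕ) + 1 := by rw [hval, if_neg hw]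
    have hv0 : v ≠ 0 := by
      intro h; rw [h] at hvw; simp at hvw
    have hiπ0 : i ≠ π 0 := by
      rw [hi]; intro h; exact hv0 (π.injective h)
    rw [hs, Function.update_of_ne hiπ0]
    simp only [Fin.coe_castSucc, Fin.val_succ]
    congr 1
    have : ((w : ℕ) < (t : ℕ)) ↔ ((v : ℕ) < (t : ℕ) + 1) := by omega
    simp only [this]

lemma vtx_cons {m k : ℕ} (y : Fin (m+1) → Fin k) (π : Equiv.Perm (Fin (m+1)))
    (σ : Equiv.Perm (Fin m)) (h00 : π 0 = 0) (hrel : ∀ t, π t.succ = (σ t).succ)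
    (hy0 : (y 0 : ℕ) + 1 = k) (t : Fin (m+1)) :
    vtx y π t.succ = Fin.cons k (vtx (y ∘ Fin.succ) σ t) := by
  funext i
  refine Fin.cases ?_ ?_ i
  · have hsymm : π.symm 0 = 0 := (Equiv.symm_apply_eq π).2 h00.symm
    show (y 0 : ℕ) + (if ((π.symm 0 : ℕ) < (t.succ : ℕ)) then 1 else 0) = _
    rw [hsymm, Fin.cons_zero]
    simp only [Fin.val_zero, Fin.val_succ]
    simp only [show (0:ℕ) < (t:ℕ) + 1 from by omega, if_true]
    omega
  · intro i'
    have hsymm : π.symm i'.succ = (σ.symm i').succ := by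
      apply π.injective
      rw [Equiv.apply_symm_apply, hrel, Equiv.apply_symm_apply]
    show (y i'.succ : ℕ) + (if ((π.symm i'.succ : ℕ) < (t.succ : ℕ)) then 1 else 0) = _
    rw [hsymm, Fin.cons_succ]
    unfold vtx
    simp only [Function.comp_apply, Fin.val_succ]
    congr 1
    simp only [show ∀ a b : ℕ, (a + 1 < b + 1) ↔ (a < b) from by omega]

lemma erase_zero_eq_image_succ {n : ℕ} :
    (univ.erase (0 : Fin (n+1))) = univ.image Fin.succ := by
  ext a
  simp [Fin.exists_succ_eq, eq_comm]

lemma erase_last_eq_image_castSucc {n : ℕ} :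
    (univ.erase (Fin.last n)) = univ.image Fin.castSucc := by
  ext a
  simp [Fin.exists_castSucc_eq, eq_comm]


section Step
variable {m k : ℕ}

lemma facet_shift (ℓ : (Fin (m+1) → ℕ) → Fin (m+2)) (y : Fin (m+1) → Fin k)
    (π : Equiv.Perm (Fin (m+1))) (hb : (y (π 0) : ℕ) + 1 < k) :
    ((univ.erase (Fin.last (m+1))).image fun t =>
        ℓ (vtx (Function.update y (π 0) ⟨(y (π 0) : ℕ) + 1, hb⟩) (π * finRotate (m+1)) t))
      = ((univ.erase (0 : Fin (m+2))).image fun t => ℓ (vtx y π t)) := by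
  rw [erase_last_eq_image_castSucc, erase_zero_eq_image_succ, Finset.image_image,
    Finset.image_image]
  apply Finset.image_congr
  intro t _
  simp only [Function.comp_apply]
  rw [vtx_shift]

lemma door_shift (ℓ : (Fin (m+1) → ℕ) → Fin (m+2)) (y : Fin (m+1) → Fin k)
    (π : Equiv.Perm (Fin (m+1))) (hb : (y (π 0) : ℕ) + 1 < k) :
    IsDoor ℓ (Function.update y (π 0) ⟨(y (π 0) : ℕ) + 1, hb⟩) (π * finRotate (m+1))
        (Fin.last (m+1))
      ↔ IsDoor ℓ y π 0 := by
  unfold IsDoor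
  rw [facet_shift]

lemma door_swap (ℓ : (Fin (m+1) → ℕ) → Fin (m+2)) (y : Fin (m+1) → Fin k)
    (π : Equiv.Perm (Fin (m+1))) (p p' : Fin (m+1)) (j : Fin (m+2)) (h0 : (j : ℕ) ≠ 0)
    (hp : (p : ℕ) + 1 = (j : ℕ)) (hp' : (p' : ℕ) = (j : ℕ)) :
    IsDoor ℓ y (π * Equiv.swap p p') j ↔ IsDoor ℓ y π j := by
  unfold IsDoor
  have : ((univ.erase j).image fun t => ℓ (vtx y (π * Equiv.swap p p') t))
      = ((univ.erase j).image fun t => ℓ (vtx y π t)) := by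
    apply Finset.image_congr
    intro t ht
    rcases Finset.mem_erase.1 (Finset.mem_coe.1 ht) with ⟨htj, -⟩
    show ℓ (vtx y (π * Equiv.swap p p') t) = ℓ (vtx y π t)
    rw [vtx_swap y π p p' j t h0 hp hp' (fun hc => htj (Fin.ext hc))]
  rw [this]

/-- On the face `v_c = 0` (last position, bottom value) there is no door. -/
lemma not_door_last (ℓ : (Fin (m+1) → ℕ) → Fin (m+2)) (y : Fin (m+1) → Fin k)
    (π : Equiv.Perm (Fin (m+1)))
    (hB : ∀ v (i : Fin (m+1)), v i = 0 → ℓ v ≤ i.castSucc)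
    (hy : (y (π (Fin.last m)) : ℕ) = 0) :
    ¬ IsDoor ℓ y π (Fin.last (m+1)) := by
  intro hd
  set c := π (Fin.last m) with hc
  have hcoord : ∀ t : Fin (m+2), t ≠ Fin.last (m+1) → vtx y π t c = 0 := by
    intro t ht
    unfold vtx
    have hsymm : π.symm c = Fin.last m := by rw [hc, Equiv.symm_apply_apply]
    rw [hsymm, hy]
    have htv : (t : ℕ) < m + 1 := by
      have h1 := t.isLt
      have h2 : (t : ℕ) ≠ m + 1 := fun h => ht (Fin.ext (by simp [h]))
      omega
    rw [if_neg (by simp only [Fin.val_last]; omega)]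
  have hmem : Fin.last (m+1) ∈ (univ.erase (Fin.last (m+1))).image
      (fun t => ℓ (vtx y π t)) := by
    rw [hd]
    exact Finset.mem_erase.2 ⟨by simp [Fin.ext_iff], Finset.mem_univ _⟩
  rcases Finset.mem_image.1 hmem with ⟨t, ht, hlab⟩
  rcases Finset.mem_erase.1 ht with ⟨htl, -⟩
  have := hB (vtx y π t) c (hcoord t htl)
  rw [hlab] at this
  have h1 : (c : ℕ) < m + 1 := c.isLt
  have h2 := Fin.le_def.1 this
  simp only [Fin.val_last, Fin.coe_castSucc] at h2
  omega

/-- If the facet at `j = 0` lies in the face `v_c = k` then `c = π 0 = 0`. -/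
lemma door_zero_pi_zero (ℓ : (Fin (m+1) → ℕ) → Fin (m+2)) (y : Fin (m+1) → Fin k)
    (π : Equiv.Perm (Fin (m+1)))
    (hA : ∀ v (i : Fin (m+1)), ℓ v = i.castSucc → v i < k)
    (hy : (y (π 0) : ℕ) + 1 = k) (hd : IsDoor ℓ y π 0) :
    π 0 = 0 := by
  set c := π 0 with hc
  by_contra hne
  have hcoord : ∀ t : Fin (m+2), t ≠ 0 → vtx y π t c = k := by
    intro t ht
    unfold vtx
    have hsymm : π.symm c = 0 := by rw [hc, Equiv.symm_apply_apply]
    rw [hsymm]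
    have htv : 0 < (t : ℕ) := by
      rcases Nat.eq_zero_or_pos (t : ℕ) with h | h
      · exact absurd (Fin.ext h) ht
      · exact h
    rw [if_pos (by simpa using htv)]
    omega
  have hmem : c.castSucc ∈ (univ.erase (0 : Fin (m+2))).image (fun t => ℓ (vtx y π t)) := by
    rw [hd]
    refine Finset.mem_erase.2 ⟨?_, Finset.mem_univ _⟩
    simp only [Ne, Fin.ext_iff, Fin.coe_castSucc, Fin.val_zero]
    intro h
    exact hne (Fin.ext h)
  rcases Finset.mem_image.1 hmem with ⟨t, ht, hlab⟩
  rcases Finset.mem_erase.1 ht with ⟨ht0, -⟩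
  have := hA (vtx y π t) c hlab
  rw [hcoord t ht0] at this
  omega

end Step

section Bij
variable {m k : ℕ}

/-- The induced labelling in one dimension lower, on the face `v_0 = k`. -/
def labDown (ℓ : (Fin (m+1) → ℕ) → Fin (m+2)) (k : ℕ) : (Fin m → ℕ) → Fin (m+1) :=
  fun v' => ⟨(ℓ (Fin.cons k v') : ℕ) - 1, by have := (ℓ (Fin.cons k v')).isLt; omega⟩

lemma labDown_succ (ℓ : (Fin (m+1) → ℕ) → Fin (m+2))
    (hA : ∀ v (i : Fin (m+1)), ℓ v = i.castSucc → v i < k) (v' : Fin m → ℕ) :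
    Fin.succ (labDown ℓ k v') = ℓ (Fin.cons k v') := by
  have hne : ℓ (Fin.cons k v') ≠ 0 := by
    intro h
    have : (0 : Fin (m+2)) = (0 : Fin (m+1)).castSucc := by simp [Fin.ext_iff]
    have hlt := hA (Fin.cons k v') 0 (by rw [h, this])
    rw [Fin.cons_zero] at hlt
    omega
  have hpos : 0 < (ℓ (Fin.cons k v') : ℕ) := by
    rcases Nat.eq_zero_or_pos (ℓ (Fin.cons k v') : ℕ) with h | h
    · exact absurd (Fin.ext (by simpa using h)) hne
    · exact h
  apply Fin.ext
  simp only [Fin.val_succ, labDown]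
  omega

lemma labDown_axA (ℓ : (Fin (m+1) → ℕ) → Fin (m+2))
    (hA : ∀ v (i : Fin (m+1)), ℓ v = i.castSucc → v i < k) :
    ∀ v' (i : Fin m), labDown ℓ k v' = i.castSucc → v' i < k := by
  intro v' i h
  have hsucc : ℓ (Fin.cons k v') = (i.succ).castSucc := by
    rw [← labDown_succ ℓ hA v', h]
    apply Fin.ext
    simp
  have := hA (Fin.cons k v') i.succ hsucc
  rwa [Fin.cons_succ] at this

lemma labDown_axB (ℓ : (Fin (m+1) → ℕ) → Fin (m+2))
    (hA : ∀ v (i : Fin (m+1)), ℓ v = i.castSucc → v i < k)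
    (hB : ∀ v (i : Fin (m+1)), v i = 0 → ℓ v ≤ i.castSucc) :
    ∀ v' (i : Fin m), v' i = 0 → labDown ℓ k v' ≤ i.castSucc := by
  intro v' i h
  have h0 : (Fin.cons k v' : Fin (m+1) → ℕ) i.succ = 0 := by rwa [Fin.cons_succ]
  have hle := hB (Fin.cons k v') i.succ h0
  have hval := Fin.le_def.1 hle
  simp only [Fin.coe_castSucc, Fin.val_succ] at hval
  apply Fin.le_def.2
  simp only [Fin.coe_castSucc, labDown]
  omega

lemma door_iff_pan (hk : 0 < k) (ℓ : (Fin (m+1) → ℕ) → Fin (m+2))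
    (hA : ∀ v (i : Fin (m+1)), ℓ v = i.castSucc → v i < k)
    (y' : Fin m → Fin k) (σ : Equiv.Perm (Fin m)) :
    IsDoor ℓ (Fin.cons ⟨k-1, by omega⟩ y') (Equiv.Perm.decomposeFin.symm (0, σ)) 0
      ↔ IsPan (labDown ℓ k) y' σ := by
  set π : Equiv.Perm (Fin (m+1)) := Equiv.Perm.decomposeFin.symm (0, σ) with hπ
  set y : Fin (m+1) → Fin k := Fin.cons ⟨k-1, by omega⟩ y' with hy
  have h00 : π 0 = 0 := Equiv.Perm.decomposeFin_symm_apply_zero 0 σ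
  have hrel : ∀ t : Fin m, π t.succ = (σ t).succ := by
    intro t
    rw [hπ, Equiv.Perm.decomposeFin_symm_apply_succ]
    simp
  have hy0 : (y 0 : ℕ) + 1 = k := by
    rw [hy, Fin.cons_zero]
    show k - 1 + 1 = k
    omega
  have hyc : y ∘ Fin.succ = y' := by
    funext i
    simp [hy]
  unfold IsDoor IsPan
  rw [erase_zero_eq_image_succ, Finset.image_image]
  have himg : (univ.image fun t : Fin (m+1) => ℓ (vtx y π t.succ))
      = (univ.image fun t : Fin (m+1) => labDown ℓ k (vtx y' σ t)).image Fin.succ := by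
    rw [Finset.image_image]
    apply Finset.image_congr
    intro t _
    simp only [Function.comp_apply]
    rw [vtx_cons y π σ h00 hrel hy0 t, hyc, labDown_succ ℓ hA]
  have hcomp : (univ.image (((fun t => ℓ (vtx y π t)) : Fin (m+2) → Fin (m+2)) ∘ Fin.succ))
      = (univ.image fun t : Fin (m+1) => ℓ (vtx y π t.succ)) := rfl
  rw [hcomp, himg]
  constructor
  · intro h
    exact Finset.image_injective (Fin.succ_injective _) h
  · intro h
    rw [h]

end Bij

section Partner
variable {m k : ℕ}

lemma last_ne_zero' : (Fin.last (m+1) : Fin (m+2)) ≠ 0 := by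
  simp [Fin.ext_iff]

lemma partner_zero (y : Fin (m+1) → Fin k) (π : Equiv.Perm (Fin (m+1)))
    (hb : (y (π 0) : ℕ) + 1 < k) :
    partner ((y, π), (0 : Fin (m+2))) =
      ((Function.update y (π 0) ⟨(y (π 0) : ℕ) + 1, hb⟩, π * finRotate (m+1)),
        Fin.last (m+1)) := by
  unfold partner
  rw [dif_pos rfl]
  simp only []
  rw [dif_pos hb]

lemma partner_last (y : Fin (m+1) → Fin k) (π : Equiv.Perm (Fin (m+1))) :
    partner ((y, π), Fin.last (m+1)) =
      ((Function.update y (π (Fin.last m))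
          ⟨(y (π (Fin.last m)) : ℕ) - 1, by have := (y (π (Fin.last m))).isLt; omega⟩,
        π * (finRotate (m+1))⁻¹), 0) := by
  unfold partner
  rw [dif_neg last_ne_zero', dif_pos rfl]

lemma partner_mid (y : Fin (m+1) → Fin k) (π : Equiv.Perm (Fin (m+1))) (j : Fin (m+2))
    (h0 : j ≠ 0) (hl : j ≠ Fin.last (m+1)) :
    partner ((y, π), j) =
      ((y, π * Equiv.swap (⟨(j : ℕ) - 1, by have := j.isLt; omega⟩ : Fin (m+1))
          (⟨(j : ℕ), by
            have h1 := j.isLt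
            have h2 : (j : ℕ) ≠ m + 1 := fun hc => hl (Fin.ext (by simp [hc]))
            omega⟩ : Fin (m+1))), j) := by
  unfold partner
  rw [dif_neg h0, dif_neg hl]

lemma rot_symm_zero : ((finRotate (m+1))⁻¹ : Equiv.Perm (Fin (m+1))) 0 = Fin.last m := by
  rw [Equiv.Perm.inv_def]
  exact (Equiv.symm_apply_eq _).2 finRotate_last.symm

lemma rot_apply_last : (finRotate (m+1)) (Fin.last m) = 0 := finRotate_last

end Partner

section Invol
variable {m k : ℕ}

def isE0 (k : ℕ) {m : ℕ} (t : ((Fin (m+1) → Fin k) × Equiv.Perm (Fin (m+1))) × Fin (m+2)) : Prop :=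
  t.2 = 0 ∧ (t.1.1 (t.1.2 0) : ℕ) + 1 = k

lemma last_case_core (ℓ : (Fin (m+1) → ℕ) → Fin (m+2)) (y : Fin (m+1) → Fin k)
    (π : Equiv.Perm (Fin (m+1)))
    (hB : ∀ v (i : Fin (m+1)), v i = 0 → ℓ v ≤ i.castSucc)
    (hd : IsDoor ℓ y π (Fin.last (m+1))) :
    1 ≤ (y (π (Fin.last m)) : ℕ) := by
  by_contra h
  exact not_door_last ℓ y π hB (by omega) hd

lemma last_claims (y : Fin (m+1) → Fin k) (π : Equiv.Perm (Fin (m+1)))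
    (hc1 : 1 ≤ (y (π (Fin.last m)) : ℕ)) :
    ∃ hb : ((Function.update y (π (Fin.last m))
          ⟨(y (π (Fin.last m)) : ℕ) - 1, by have := (y (π (Fin.last m))).isLt; omega⟩)
        ((π * (finRotate (m+1))⁻¹) 0) : ℕ) + 1 < k,
      Function.update
          (Function.update y (π (Fin.last m))
            ⟨(y (π (Fin.last m)) : ℕ) - 1, by have := (y (π (Fin.last m))).isLt; omega⟩)
          ((π * (finRotate (m+1))⁻¹) 0)
          ⟨((Function.update y (π (Fin.last m))
                ⟨(y (π (Fin.last m)) : ℕ) - 1, by have := (y (π (Fin.last m))).isLt; omega⟩)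
              ((π * (finRotate (m+1))⁻¹) 0) : ℕ) + 1, hb⟩ = y
        ∧ (π * (finRotate (m+1))⁻¹) * finRotate (m+1) = π := by
  set c := π (Fin.last m) with hc
  set w1 : Fin k := ⟨(y c : ℕ) - 1, by have := (y c).isLt; omega⟩ with hw1
  have hπ0 : (π * (finRotate (m+1))⁻¹) 0 = c := by
    rw [Equiv.Perm.mul_apply, rot_symm_zero]
  have hval : ((Function.update y c w1) ((π * (finRotate (m+1))⁻¹) 0) : ℕ)
      = (y c : ℕ) - 1 := by rw [hπ0, Function.update_self]
  have hb : ((Function.update y c w1) ((π * (finRotate (m+1))⁻¹) 0) : ℕ) + 1 < k := by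
    rw [hval]; have := (y c).isLt; omega
  refine ⟨hb, ?_, inv_mul_cancel_right π (finRotate (m+1))⟩
  have hmk : (⟨((Function.update y c w1) ((π * (finRotate (m+1))⁻¹) 0) : ℕ) + 1, hb⟩ : Fin k)
      = y c := by
    apply Fin.ext
    simp only [hval]
    omega
  rw [hmk, hπ0, Function.update_idem, Function.update_eq_self]

lemma zero_claims (y : Fin (m+1) → Fin k) (π : Equiv.Perm (Fin (m+1)))
    (hb : (y (π 0) : ℕ) + 1 < k) :
    ((π * finRotate (m+1)) (Fin.last m) = π 0)
    ∧ Function.update (Function.update y (π 0) ⟨(y (π 0) : ℕ) + 1, hb⟩)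
        ((π * finRotate (m+1)) (Fin.last m))
        ⟨((Function.update y (π 0) ⟨(y (π 0) : ℕ) + 1, hb⟩)
            ((π * finRotate (m+1)) (Fin.last m)) : ℕ) - 1,
          by have := ((Function.update y (π 0) ⟨(y (π 0) : ℕ) + 1, hb⟩)
              ((π * finRotate (m+1)) (Fin.last m))).isLt; omega⟩ = y
    ∧ (π * finRotate (m+1)) * (finRotate (m+1))⁻¹ = π := by
  have hπ1 : (π * finRotate (m+1)) (Fin.last m) = π 0 := by
    rw [Equiv.Perm.mul_apply, rot_apply_last]
  refine ⟨hπ1, ?_, mul_inv_cancel_right π (finRotate (m+1))⟩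
  set y1 := Function.update y (π 0) (⟨(y (π 0) : ℕ) + 1, hb⟩ : Fin k) with hy1
  have hval : (y1 ((π * finRotate (m+1)) (Fin.last m)) : ℕ) = (y (π 0) : ℕ) + 1 := by
    rw [hπ1, hy1, Function.update_self]
  have hmk : (⟨(y1 ((π * finRotate (m+1)) (Fin.last m)) : ℕ) - 1,
      by have := (y1 ((π * finRotate (m+1)) (Fin.last m))).isLt; omega⟩ : Fin k) = y (π 0) := by
    apply Fin.ext
    simp only [hval]
    omega
  rw [hmk, hπ1, Function.update_idem, Function.update_eq_self]

end Invol

section InvolMain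
variable {m k : ℕ}

lemma partner_mem (ℓ : (Fin (m+1) → ℕ) → Fin (m+2))
    (hB : ∀ v (i : Fin (m+1)), v i = 0 → ℓ v ≤ i.castSucc)
    (t : ((Fin (m+1) → Fin k) × Equiv.Perm (Fin (m+1))) × Fin (m+2))
    (hd : IsDoor ℓ t.1.1 t.1.2 t.2) (hnc : ¬ isE0 k t) :
    IsDoor ℓ (partner t).1.1 (partner t).1.2 (partner t).2 ∧ ¬ isE0 k (partner t) := by
  obtain ⟨⟨y, π⟩, j⟩ := t
  simp only [isE0, not_and] at hnc
  simp only [] at hd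
  by_cases hj0 : j = 0
  · subst hj0
    have hb : (y (π 0) : ℕ) + 1 < k := by
      have h1 := (y (π 0)).isLt
      have h2 := hnc rfl
      omega
    rw [partner_zero y π hb]
    refine ⟨(door_shift ℓ y π hb).2 hd, ?_⟩
    simp only [isE0, not_and]
    intro h
    exact absurd h last_ne_zero'
  · by_cases hjl : j = Fin.last (m+1)
    · subst hjl
      have hc1 := last_case_core ℓ y π hB hd
      obtain ⟨hb, hupd, hmul⟩ := last_claims y π hc1
      rw [partner_last y π]
      constructor
      · have hiff := door_shift ℓ
          (Function.update y (π (Fin.last m))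
            ⟨(y (π (Fin.last m)) : ℕ) - 1, by have := (y (π (Fin.last m))).isLt; omega⟩)
          (π * (finRotate (m+1))⁻¹) hb
        rw [hupd, hmul] at hiff
        exact hiff.1 hd
      · simp only [isE0, not_and]
        intro _
        have hval : ((Function.update y (π (Fin.last m))
            ⟨(y (π (Fin.last m)) : ℕ) - 1, by have := (y (π (Fin.last m))).isLt; omega⟩)
            ((π * (finRotate (m+1))⁻¹) 0) : ℕ) + 1 < k := hb
        omega
    · rw [partner_mid y π j hj0 hjl]
      have hv0 : (j : ℕ) ≠ 0 := fun h => hj0 (Fin.ext h)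
      refine ⟨?_, ?_⟩
      · refine (door_swap ℓ y π _ _ j hv0 ?_ ?_).2 hd
        · show (j : ℕ) - 1 + 1 = (j : ℕ)
          omega
        · rfl
      · simp only [isE0, not_and]
        intro h
        exact absurd h hj0

lemma partner_invol (ℓ : (Fin (m+1) → ℕ) → Fin (m+2))
    (hB : ∀ v (i : Fin (m+1)), v i = 0 → ℓ v ≤ i.castSucc)
    (t : ((Fin (m+1) → Fin k) × Equiv.Perm (Fin (m+1))) × Fin (m+2))
    (hd : IsDoor ℓ t.1.1 t.1.2 t.2) (hnc : ¬ isE0 k t) :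
    partner (partner t) = t := by
  obtain ⟨⟨y, π⟩, j⟩ := t
  simp only [isE0, not_and] at hnc
  simp only [] at hd
  by_cases hj0 : j = 0
  · subst hj0
    have hb : (y (π 0) : ℕ) + 1 < k := by
      have h1 := (y (π 0)).isLt
      have h2 := hnc rfl
      omega
    rw [partner_zero y π hb, partner_last]
    obtain ⟨hπ1, hupd, hmul⟩ := zero_claims y π hb
    rw [hupd, hmul]
  · by_cases hjl : j = Fin.last (m+1)
    · subst hjl
      have hc1 := last_case_core ℓ y π hB hd
      obtain ⟨hb, hupd, hmul⟩ := last_claims y π hc1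
      rw [partner_last y π, partner_zero _ _ hb, hupd, hmul]
    · rw [partner_mid y π j hj0 hjl, partner_mid y _ j hj0 hjl]
      rw [mul_assoc, Equiv.swap_mul_self, mul_one]

lemma partner_ne (ℓ : (Fin (m+1) → ℕ) → Fin (m+2))
    (t : ((Fin (m+1) → Fin k) × Equiv.Perm (Fin (m+1))) × Fin (m+2))
    (hnc : ¬ isE0 k t) : partner t ≠ t := by
  obtain ⟨⟨y, π⟩, j⟩ := t
  simp only [isE0, not_and] at hnc
  by_cases hj0 : j = 0
  · subst hj0
    have hb : (y (π 0) : ℕ) + 1 < k := by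
      have h1 := (y (π 0)).isLt
      have h2 := hnc rfl
      omega
    rw [partner_zero y π hb]
    intro h
    have := congrArg (fun x => x.2) h
    exact last_ne_zero' this
  · by_cases hjl : j = Fin.last (m+1)
    · subst hjl
      rw [partner_last y π]
      intro h
      have := congrArg (fun x => x.2) h
      exact last_ne_zero' this.symm
    · rw [partner_mid y π j hj0 hjl]
      intro h
      have hπ := congrArg (fun x => x.1.2) h
      simp only [] at hπ
      have hswap : Equiv.swap
          (⟨(j : ℕ) - 1, by have := j.isLt; omega⟩ : Fin (m+1))
          (⟨(j : ℕ), by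
            have h1 := j.isLt
            have h2 : (j : ℕ) ≠ m + 1 := fun hc => hjl (Fin.ext (by simp [hc]))
            omega⟩ : Fin (m+1)) = 1 :=
        mul_left_cancel (show π * _ = π * 1 from by rw [mul_one]; exact hπ)
      have hv0 : (j : ℕ) ≠ 0 := fun h' => hj0 (Fin.ext h')
      have happ := congrArg (fun (e : Equiv.Perm (Fin (m+1))) =>
        e (⟨(j : ℕ) - 1, by have := j.isLt; omega⟩ : Fin (m+1))) hswap
      simp only [Equiv.swap_apply_left] at happ
      have hval := congrArg Fin.val happ
      simp only [Equiv.Perm.one_apply] at hval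
      omega

end InvolMain

theorem pan_odd : ∀ (M : ℕ) {k : ℕ}, 0 < k → ∀ (ℓ : (Fin M → ℕ) → Fin (M+1)),
    (∀ v (i : Fin M), ℓ v = i.castSucc → v i < k) →
    (∀ v (i : Fin M), v i = 0 → ℓ v ≤ i.castSucc) →
    ((univ.filter fun p : (Fin M → Fin k) × Equiv.Perm (Fin M) =>
      IsPan ℓ p.1 p.2).card) % 2 = 1 := by
  intro M
  induction M with
  | zero =>
    intro k hk ℓ hA hB
    have hall : ∀ p : (Fin 0 → Fin k) × Equiv.Perm (Fin 0), IsPan ℓ p.1 p.2 := by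
      intro p
      unfold IsPan
      apply Finset.eq_univ_of_forall
      intro b
      have : b = ℓ (vtx p.1 p.2 0) := by
        apply Fin.ext
        have h1 := b.isLt
        have h2 := (ℓ (vtx p.1 p.2 0)).isLt
        omega
      rw [this]
      exact Finset.mem_image_of_mem _ (Finset.mem_univ _)
    rw [Finset.filter_true_of_mem (fun p _ => hall p), Finset.card_univ,
      Fintype.card_prod, Fintype.card_perm]
    simp
  | succ m ih =>
    intro k hk ℓ hA hB
    classical
    set E : Finset (((Fin (m+1) → Fin k) × Equiv.Perm (Fin (m+1))) × Fin (m+2)) :=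
      univ.filter (fun t => IsDoor ℓ t.1.1 t.1.2 t.2) with hE
    -- Step 1 : Pan count ≡ E.card  (mod 2)
    have hfib : E.card = ∑ p ∈ (univ : Finset ((Fin (m+1) → Fin k) × Equiv.Perm (Fin (m+1)))),
        (E.filter fun t => t.1 = p).card :=
      Finset.card_eq_sum_card_fiberwise (fun t _ => Finset.mem_univ _)
    have hfib2 : ∀ p : (Fin (m+1) → Fin k) × Equiv.Perm (Fin (m+1)),
        (E.filter fun t => t.1 = p).card = (univ.filter fun j => IsDoor ℓ p.1 p.2 j).card := by
      intro p
      apply Finset.card_bij (fun t _ => t.2)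
      · intro t ht
        simp only [hE, Finset.mem_filter, Finset.mem_univ, true_and] at ht ⊢
        rcases ht with ⟨hd, hp⟩
        rw [← hp]
        exact hd
      · intro t1 h1 t2 h2 he
        simp only [hE, Finset.mem_filter] at h1 h2
        exact Prod.ext (h1.2.trans h2.2.symm) he
      · intro j hj
        refine ⟨(p, j), ?_, rfl⟩
        simp only [hE, Finset.mem_filter, Finset.mem_univ, true_and] at hj ⊢
        exact ⟨hj, trivial⟩
    have step1 : ((univ.filter fun p : (Fin (m+1) → Fin k) × Equiv.Perm (Fin (m+1)) =>
        IsPan ℓ p.1 p.2).card) % 2 = E.card % 2 := by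
      rw [Finset.card_filter, hfib, Finset.sum_nat_mod, Finset.sum_nat_mod _ _
        (fun p => (E.filter fun t => t.1 = p).card)]
      congr 1
      apply Finset.sum_congr rfl
      intro p _
      rw [hfib2 p]
      exact (door_count_parity (fun j => ℓ (vtx p.1 p.2 j))).symm
    -- Step 2 : involution
    set E0 : Finset _ := E.filter (fun t => isE0 k t) with hE0
    set Ep : Finset _ := E.filter (fun t => ¬ isE0 k t) with hEp
    have hsplit : E0.card + Ep.card = E.card := Finset.card_filter_add_card_filter_not _
    have hpe : Even Ep.card := by
      apply even_card_of_invol Ep partner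
      · intro t ht
        simp only [hEp, hE, Finset.mem_filter, Finset.mem_univ, true_and] at ht ⊢
        exact partner_mem ℓ hB t ht.1 ht.2
      · intro t ht
        simp only [hEp, hE, Finset.mem_filter, Finset.mem_univ, true_and] at ht
        exact partner_invol ℓ hB t ht.1 ht.2
      · intro t ht
        simp only [hEp, hE, Finset.mem_filter, Finset.mem_univ, true_and] at ht
        exact partner_ne ℓ t ht.2
    -- Step 3 : E0.card equals the pan count one dimension lower
    have step3 : E0.card = ((univ.filter fun q : (Fin m → Fin k) × Equiv.Perm (Fin m) =>
        IsPan (labDown ℓ k) q.1 q.2).card) := by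
      symm
      apply Finset.card_bij (fun q _ =>
        ((Fin.cons ⟨k-1, by omega⟩ q.1, Equiv.Perm.decomposeFin.symm (0, q.2)),
          (0 : Fin (m+2))))
      · intro q hq
        simp only [Finset.mem_filter, Finset.mem_univ, true_and] at hq
        simp only [hE0, hE, Finset.mem_filter, Finset.mem_univ, true_and]
        have hval : ((Fin.cons (⟨k-1, by omega⟩ : Fin k) q.1 : Fin (m+1) → Fin k)
            ((Equiv.Perm.decomposeFin.symm ((0 : Fin (m+1)), q.2)) 0) : ℕ) + 1 = k := by
          rw [Equiv.Perm.decomposeFin_symm_apply_zero, Fin.cons_zero]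
          show k - 1 + 1 = k
          omega
        exact ⟨(door_iff_pan hk ℓ hA q.1 q.2).2 hq, rfl, hval⟩
      · intro q1 h1 q2 h2 he
        simp only [Prod.mk.injEq] at he
        obtain ⟨⟨hy, hπ⟩, -⟩ := he
        have hy' : q1.1 = q2.1 := by
          funext i
          have := congrFun hy i.succ
          rwa [Fin.cons_succ, Fin.cons_succ] at this
        have hπ' : q1.2 = q2.2 := by
          have := Equiv.Perm.decomposeFin.symm.injective hπ
          exact (Prod.ext_iff.1 this).2
        exact Prod.ext hy' hπ'
      · intro t ht
        simp only [hE0, hE, Finset.mem_filter, Finset.mem_univ, true_and, isE0] at ht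
        obtain ⟨hd, hj0, hyv⟩ := ht
        obtain ⟨⟨y, π⟩, j⟩ := t
        simp only [] at hd hj0 hyv
        subst hj0
        have hπ00 : π 0 = 0 := door_zero_pi_zero ℓ y π hA hyv hd
        rw [hπ00] at hyv
        have hfst : (Equiv.Perm.decomposeFin π).1 = 0 := by
          have h1 : Equiv.Perm.decomposeFin.symm (Equiv.Perm.decomposeFin π) = π :=
            Equiv.symm_apply_apply _ _
          have h2 := congrArg (fun e : Equiv.Perm (Fin (m+1)) => e 0) h1
          rw [← Prod.mk.eta (p := Equiv.Perm.decomposeFin π),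
            Equiv.Perm.decomposeFin_symm_apply_zero] at h2
          rw [h2, hπ00]
        have hπeq : Equiv.Perm.decomposeFin.symm (0, (Equiv.Perm.decomposeFin π).2) = π := by
          rw [← hfst, Prod.mk.eta, Equiv.symm_apply_apply]
        have hyeq : (Fin.cons (⟨k-1, by omega⟩ : Fin k) (y ∘ Fin.succ) : Fin (m+1) → Fin k)
            = y := by
          funext i
          refine Fin.cases ?_ ?_ i
          · rw [Fin.cons_zero]
            apply Fin.ext
            show k - 1 = (y 0 : ℕ)
            omega
          · intro i'
            rw [Fin.cons_succ]
            rfl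
        refine ⟨(y ∘ Fin.succ, (Equiv.Perm.decomposeFin π).2), ?_, ?_⟩
        · simp only [Finset.mem_filter, Finset.mem_univ, true_and]
          apply (door_iff_pan hk ℓ hA (y ∘ Fin.succ) (Equiv.Perm.decomposeFin π).2).1
          rw [hyeq, hπeq]
          exact hd
        · simp only []
          rw [hyeq, hπeq]
    -- assemble
    rw [step1, ← hsplit]
    have ihe := ih hk (labDown ℓ k) (labDown_axA ℓ hA) (labDown_axB ℓ hA hB)
    rw [← step3] at ihe
    rcases hpe with ⟨c, hc⟩
    omega

theorem exists_pan {M k : ℕ} (hk : 0 < k) (ℓ : (Fin M → ℕ) → Fin (M+1))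
    (hA : ∀ v (i : Fin M), ℓ v = i.castSucc → v i < k)
    (hB : ∀ v (i : Fin M), v i = 0 → ℓ v ≤ i.castSucc) :
    ∃ p : (Fin M → Fin k) × Equiv.Perm (Fin M), IsPan ℓ p.1 p.2 := by
  classical
  have h := pan_odd M hk ℓ hA hB
  by_contra hcon
  push_neg at hcon
  rw [Finset.filter_false_of_mem (fun p _ => hcon p)] at h
  simp at h

/-! ### Analysis: from the combinatorial lemma to a fixed point theorem -/

open Filter Topology

section Analysis
variable {M : ℕ}

/-- the point of the cube corresponding to a grid point at scale `k` -/
noncomputable def pt (k : ℕ) (v : Fin M → ℕ) : Fin M → ℝ := fun i => (v i : ℝ) / k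

open Classical in
/-- the Sperner labelling induced by a self-map of the cube -/
noncomputable def lab (k : ℕ) (G : (Fin M → ℝ) → (Fin M → ℝ)) (v : Fin M → ℕ) :
    Fin (M+1) :=
  (insert (Fin.last M) ((univ.filter
      (fun i : Fin M => v i < k ∧ pt k v i ≤ G (pt k v) i)).image Fin.castSucc)).min'
    (Finset.insert_nonempty _ _)

variable {k : ℕ} {G : (Fin M → ℝ) → (Fin M → ℝ)}

lemma lab_le {v : Fin M → ℕ} {i : Fin M} (h : v i < k ∧ pt k v i ≤ G (pt k v) i) :
    lab k G v ≤ i.castSucc := by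
  classical
  apply Finset.min'_le
  apply Finset.mem_insert_of_mem
  apply Finset.mem_image_of_mem
  simp only [Finset.mem_filter, Finset.mem_univ, true_and]
  exact h

lemma lab_spec {v : Fin M → ℕ} {i : Fin M} (h : lab k G v = i.castSucc) :
    v i < k ∧ pt k v i ≤ G (pt k v) i := by
  classical
  have hmem := Finset.min'_mem (insert (Fin.last M) ((univ.filter
      (fun i : Fin M => v i < k ∧ pt k v i ≤ G (pt k v) i)).image Fin.castSucc))
    (Finset.insert_nonempty _ _)
  rw [show (insert (Fin.last M) ((univ.filter
      (fun i : Fin M => v i < k ∧ pt k v i ≤ G (pt k v) i)).image Fin.castSucc)).min'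
      (Finset.insert_nonempty _ _) = lab k G v from rfl, h] at hmem
  rcases Finset.mem_insert.1 hmem with hl | hl
  · exfalso
    have := congrArg Fin.val hl
    simp only [Fin.coe_castSucc, Fin.val_last] at this
    have := i.isLt
    omega
  · rcases Finset.mem_image.1 hl with ⟨i', hi', heq⟩
    have : i' = i := Fin.castSucc_injective _ heq
    subst this
    simpa using hi'

lemma lab_last {v : Fin M → ℕ} (h : lab k G v = Fin.last M) (i : Fin M) :
    ¬ (v i < k ∧ pt k v i ≤ G (pt k v) i) := by
  intro hP
  have h1 := lab_le (G := G) hP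
  rw [h] at h1
  have h2 := Fin.le_def.1 h1
  simp only [Fin.val_last, Fin.coe_castSucc] at h2
  have := i.isLt
  omega

lemma approx (hk : 0 < k) (hGmem : ∀ x, G x ∈ Set.Icc (0 : Fin M → ℝ) 1) :
    ∃ z : Fin M → ℝ, z ∈ Set.Icc (0 : Fin M → ℝ) 1 ∧ (∀ i, G z i ≤ z i) ∧
      ∀ i : Fin M, ∃ u : Fin M → ℝ, u ∈ Set.Icc (0 : Fin M → ℝ) 1 ∧
        (∀ i', |u i' - z i'| ≤ 1 / (k : ℝ)) ∧ u i ≤ G u i := by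
  classical
  have hkR : (0 : ℝ) < (k : ℝ) := by exact_mod_cast hk
  have hA : ∀ v (i : Fin M), lab k G v = i.castSucc → v i < k :=
    fun v i h => (lab_spec h).1
  have hB : ∀ v (i : Fin M), v i = 0 → lab k G v ≤ i.castSucc := by
    intro v i h
    apply lab_le
    constructor
    · omega
    · have h0 : pt k v i = 0 := by simp [pt, h]
      rw [h0]
      exact (hGmem (pt k v)).1 i
  obtain ⟨⟨y, π⟩, hpan⟩ := exists_pan hk (lab k G) hA hB
  have hmem : ∀ b : Fin (M+1), ∃ j, lab k G (vtx y π j) = b := by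
    intro b
    have : b ∈ Finset.image (fun j => lab k G (vtx y π j)) Finset.univ := by
      rw [hpan]; exact Finset.mem_univ _
    rcases Finset.mem_image.1 this with ⟨j, -, hj⟩
    exact ⟨j, hj⟩
  have hcube : ∀ j : Fin (M+1), pt k (vtx y π j) ∈ Set.Icc (0 : Fin M → ℝ) 1 := by
    intro j
    constructor
    · intro i
      exact div_nonneg (Nat.cast_nonneg _) hkR.le
    · intro i
      have := vtx_le y π j i
      show ((vtx y π j i : ℕ) : ℝ) / k ≤ (1 : ℝ)
      rw [div_le_one hkR]
      exact_mod_cast this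
  obtain ⟨jt, hjt⟩ := hmem (Fin.last M)
  refine ⟨pt k (vtx y π jt), hcube jt, ?_, ?_⟩
  · intro i
    have hnP := lab_last hjt i
    push_neg at hnP
    by_cases hvi : vtx y π jt i < k
    · exact le_of_lt (lt_of_not_ge (fun hle => absurd hle (by
        intro h; exact absurd (hnP hvi) (not_lt.2 h))))
    · -- v i = k, so the coordinate is 1
      have hle := vtx_le y π jt i
      have hvk : vtx y π jt i = k := by omega
      have h1 : pt k (vtx y π jt) i = 1 := by
        simp [pt, hvk, div_self hkR.ne']
      rw [h1]
      have := (hGmem (pt k (vtx y π jt))).2 i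
      simpa using this
  · intro i
    obtain ⟨ji, hji⟩ := hmem i.castSucc
    have hP := lab_spec hji
    refine ⟨pt k (vtx y π ji), hcube ji, ?_, hP.2⟩
    intro i'
    have h1 := vtx_sub_le y π ji jt i'
    have h2 := vtx_sub_le y π jt ji i'
    have habs : |((vtx y π ji i' : ℕ) : ℝ) - ((vtx y π jt i' : ℕ) : ℝ)| ≤ 1 := by
      rw [abs_le]
      constructor <;> [skip; skip] <;> push_cast <;> [linarith [(by exact_mod_cast h2 :
        ((vtx y π jt i' : ℕ) : ℝ) ≤ ((vtx y π ji i' : ℕ) : ℝ) + 1)];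
        linarith [(by exact_mod_cast h1 :
        ((vtx y π ji i' : ℕ) : ℝ) ≤ ((vtx y π jt i' : ℕ) : ℝ) + 1)]]
    show |((vtx y π ji i' : ℕ) : ℝ)/k - ((vtx y π jt i' : ℕ) : ℝ)/k| ≤ 1 / (k:ℝ)
    rw [div_sub_div_same, abs_div, abs_of_pos hkR]
    gcongr
end Analysis

section FP
variable {M : ℕ}

theorem fixed_point (G : (Fin M → ℝ) → (Fin M → ℝ)) (hG : Continuous G)
    (hGmem : ∀ x, G x ∈ Set.Icc (0 : Fin M → ℝ) 1) :
    ∃ x ∈ Set.Icc (0 : Fin M → ℝ) 1, G x = x := by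
  classical
  have happrox : ∀ n : ℕ, ∃ z : Fin M → ℝ, z ∈ Set.Icc (0 : Fin M → ℝ) 1 ∧
      (∀ i, G z i ≤ z i) ∧
      ∀ i : Fin M, ∃ u : Fin M → ℝ, u ∈ Set.Icc (0 : Fin M → ℝ) 1 ∧
        (∀ i', |u i' - z i'| ≤ 1 / ((n+1 : ℕ) : ℝ)) ∧ u i ≤ G u i :=
    fun n => approx (Nat.succ_pos n) hGmem
  choose z hz1 hz2 hz3 using happrox
  choose u hu1 hu2 hu3 using hz3
  obtain ⟨x, hx, φ, hφ, hconv⟩ := (isCompact_Icc).tendsto_subseq hz1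
  have hφtop : Tendsto φ atTop atTop := hφ.tendsto_atTop
  have hsmall : Tendsto (fun t => 1 / ((φ t + 1 : ℕ) : ℝ)) atTop (𝓝 0) := by
    have h1 : Tendsto (fun n : ℕ => 1 / ((n + 1 : ℕ) : ℝ)) atTop (𝓝 0) := by
      have := tendsto_one_div_add_atTop_nhds_zero_nat (𝕜 := ℝ)
      simpa [Nat.cast_add] using this
    exact h1.comp hφtop
  have hzc : ∀ i', Tendsto (fun t => z (φ t) i') atTop (𝓝 (x i')) := by
    intro i'
    have := hconv
    rw [tendsto_pi_nhds] at this
    exact this i'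
  have hGx_le : ∀ i, G x i ≤ x i := by
    intro i
    have hGz : Tendsto (fun t => G (z (φ t)) i) atTop (𝓝 (G x i)) := by
      have h1 : Tendsto (fun t => G (z (φ t))) atTop (𝓝 (G x)) :=
        (hG.tendsto x).comp hconv
      rw [tendsto_pi_nhds] at h1
      exact h1 i
    exact le_of_tendsto_of_tendsto hGz (hzc i) (Filter.Eventually.of_forall
      (fun t => hz2 (φ t) i))
  have hx_le : ∀ i, x i ≤ G x i := by
    intro i
    have huc : Tendsto (fun t => u (φ t) i) atTop (𝓝 x) := by
      rw [tendsto_pi_nhds]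
      intro i'
      have hub : ∀ t, |u (φ t) i i' - z (φ t) i'| ≤ 1 / ((φ t + 1 : ℕ) : ℝ) :=
        fun t => hu2 (φ t) i i'
      have hdiff : Tendsto (fun t => u (φ t) i i' - z (φ t) i') atTop (𝓝 0) := by
        apply squeeze_zero_norm hub hsmall
      have := hdiff.add (hzc i')
      simpa using this
    have hu_i : Tendsto (fun t => u (φ t) i i) atTop (𝓝 (x i)) := by
      rw [tendsto_pi_nhds] at huc
      exact huc i
    have hGu : Tendsto (fun t => G (u (φ t) i) i) atTop (𝓝 (G x i)) := by
      have h1 : Tendsto (fun t => G (u (φ t) i)) atTop (𝓝 (G x)) :=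
        (hG.tendsto x).comp huc
      rw [tendsto_pi_nhds] at h1
      exact h1 i
    exact le_of_tendsto_of_tendsto hu_i hGu (Filter.Eventually.of_forall
      (fun t => hu3 (φ t) i))
  exact ⟨x, hx, funext fun i => le_antisymm (hGx_le i) (hx_le i)⟩

/-- clamp to the unit cube -/
def clampCube {M : ℕ} (x : Fin M → ℝ) : Fin M → ℝ := fun i => max 0 (min 1 (x i))

lemma clampCube_mem (x : Fin M → ℝ) : clampCube x ∈ Set.Icc (0 : Fin M → ℝ) 1 := by
  constructor
  · intro i
    exact le_max_left _ _
  · intro i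
    show max 0 (min 1 (x i)) ≤ 1
    apply max_le zero_le_one (min_le_left _ _)

lemma clampCube_eq_self {x : Fin M → ℝ} (hx : x ∈ Set.Icc (0 : Fin M → ℝ) 1) :
    clampCube x = x := by
  funext i
  have h0 : (0:ℝ) ≤ x i := hx.1 i
  have h1 : x i ≤ 1 := hx.2 i
  simp [clampCube, min_eq_right h1, max_eq_right h0]

lemma clampCube_continuous : Continuous (clampCube (M := M)) := by
  apply continuous_pi
  intro i
  exact continuous_const.max (continuous_const.min (continuous_apply i))
end FP

section PMthm
variable {M : ℕ}

theorem poincare_miranda (f : (Fin M → ℝ) → (Fin M → ℝ))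
    (hf : ContinuousOn f (Set.Icc (0 : Fin M → ℝ) 1))
    (hm : ∀ (i : Fin M) (x : Fin M → ℝ), x ∈ Set.Icc (0 : Fin M → ℝ) 1 → x i = 0 → 0 ≤ f x i)
    (hp : ∀ (i : Fin M) (x : Fin M → ℝ), x ∈ Set.Icc (0 : Fin M → ℝ) 1 → x i = 1 → f x i ≤ 0) :
    ∃ x ∈ Set.Icc (0 : Fin M → ℝ) 1, f x = 0 := by
  classical
  set G : (Fin M → ℝ) → (Fin M → ℝ) :=
    fun x => clampCube (fun i => clampCube x i + f (clampCube x) i) with hGdef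
  have hfc : Continuous fun x => f (clampCube x) :=
    hf.comp_continuous clampCube_continuous clampCube_mem
  have hGcont : Continuous G := by
    apply clampCube_continuous.comp
    apply continuous_pi
    intro i
    exact (continuous_pi_iff.1 clampCube_continuous i).add (continuous_pi_iff.1 hfc i)
  have hGmem : ∀ x, G x ∈ Set.Icc (0 : Fin M → ℝ) 1 := fun x => clampCube_mem _
  obtain ⟨x, hx, hfix⟩ := fixed_point G hGcont hGmem
  have hcx : clampCube x = x := clampCube_eq_self hx
  refine ⟨x, hx, ?_⟩
  funext i
  have heq : max 0 (min 1 (x i + f x i)) = x i := by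
    have hstep : max 0 (min 1 (clampCube x i + f (clampCube x) i)) = x i := congrFun hfix i
    rwa [hcx] at hstep
  have h0 : (0:ℝ) ≤ x i := hx.1 i
  have h1 : x i ≤ 1 := hx.2 i
  rcases lt_trichotomy (f x i) 0 with hneg | hzero | hpos
  · by_cases hge : 0 ≤ x i + f x i
    · have hmin : min 1 (x i + f x i) = x i + f x i := min_eq_right (by linarith)
      rw [hmin, max_eq_right hge] at heq
      linarith
    · push_neg at hge
      have hmin : min 1 (x i + f x i) = x i + f x i := min_eq_right (by linarith)
      rw [hmin, max_eq_left (by linarith)] at heq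
      have hx0 : x i = 0 := heq.symm
      have := hm i x hx hx0
      linarith
  · exact hzero
  · by_cases hle : x i + f x i ≤ 1
    · have hmin : min 1 (x i + f x i) = x i + f x i := min_eq_right hle
      rw [hmin, max_eq_right (by linarith)] at heq
      linarith
    · push_neg at hle
      have hmin : min 1 (x i + f x i) = 1 := min_eq_left (by linarith)
      rw [hmin, max_eq_right (by linarith)] at heq
      have hx1 : x i = 1 := heq.symm
      have := hp i x hx hx1
      linarith

end PMthm

section Separation

theorem compact_separation {E : Type*} [TopologicalSpace E] [T2Space E]
    {Z B T : Set E} (hZ : IsCompact Z) (hB : IsClosed B) (hT : IsClosed T)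
    (hBZ : B ⊆ Z) (hTZ : T ⊆ Z)
    (h : ¬ ∃ S ⊆ Z, IsPreconnected S ∧ (S ∩ B).Nonempty ∧ (S ∩ T).Nonempty) :
    ∃ Z₀ Z₁ : Set E, IsCompact Z₀ ∧ IsCompact Z₁ ∧ Z = Z₀ ∪ Z₁ ∧ Disjoint Z₀ Z₁ ∧
      B ⊆ Z₀ ∧ T ⊆ Z₁ := by
  classical
  haveI : CompactSpace Z := isCompact_iff_compactSpace.1 hZ
  set B' : Set Z := Subtype.val ⁻¹' B with hB'
  set T' : Set Z := Subtype.val ⁻¹' T with hT'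
  have hB'c : IsClosed B' := hB.preimage continuous_subtype_val
  have hT'c : IsClosed T' := hT.preimage continuous_subtype_val
  have hT'cpt : IsCompact T' := hT'c.isCompact
  have hB'cpt : IsCompact B' := hB'c.isCompact
  have stepA : ∀ b : Z, b ∈ B' → ∃ V : Set Z, IsClopen V ∧ b ∈ V ∧ V ∩ T' = ∅ := by
    intro b hb
    have hcomp : connectedComponent b ∩ T' = ∅ := by
      by_contra hne
      rcases Set.nonempty_iff_ne_empty.2 hne with ⟨t, htc, htT⟩
      apply h
      refine ⟨Subtype.val '' connectedComponent b, ?_, ?_, ?_, ?_⟩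
      · rintro x ⟨x', -, rfl⟩
        exact x'.2
      · exact isPreconnected_connectedComponent.image _ continuous_subtype_val.continuousOn
      · exact ⟨b, ⟨b, mem_connectedComponent, rfl⟩, hb⟩
      · exact ⟨t, ⟨t, htc, rfl⟩, htT⟩
    have hrep := connectedComponent_eq_iInter_isClopen b
    have hint : T' ∩ ⋂ (U : {U : Set Z // IsClopen U ∧ b ∈ U}), (U : Set Z) = ∅ := by
      rw [← hrep, Set.inter_comm]
      exact hcomp
    obtain ⟨s, hs⟩ := hT'cpt.elim_finite_subfamily_closed
      (fun U : {U : Set Z // IsClopen U ∧ b ∈ U} => (U : Set Z))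
      (fun U => U.2.1.isClosed) hint
    refine ⟨⋂ U ∈ s, (U : Set Z), ?_, ?_, ?_⟩
    · apply Set.Finite.isClopen_biInter (Finset.finite_toSet s)
      intro U _
      exact U.2.1
    · apply Set.mem_iInter₂.2
      intro U _
      exact U.2.2
    · rw [Set.inter_comm]
      exact hs
  -- use a total choice function
  have stepA' : ∀ b : Z, ∃ V : Set Z, IsClopen V ∧ (b ∈ B' → b ∈ V) ∧ V ∩ T' = ∅ := by
    intro b
    by_cases hb : b ∈ B'
    · obtain ⟨V, h1, h2, h3⟩ := stepA b hb
      exact ⟨V, h1, fun _ => h2, h3⟩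
    · exact ⟨∅, isClopen_empty, fun hc => absurd hc hb, by simp⟩
  choose V hVclopen hVmem hVT using stepA'
  have hcover : B' ⊆ ⋃ b : Z, V b := fun x hx => Set.mem_iUnion.2 ⟨x, hVmem x hx⟩
  obtain ⟨sb, hsbcov⟩ := hB'cpt.elim_finite_subcover V (fun b => (hVclopen b).isOpen) hcover
  set W : Set Z := ⋃ b ∈ sb, V b with hW
  have hWclopen : IsClopen W := by
    apply Set.Finite.isClopen_biUnion (Finset.finite_toSet sb)
    intro b _
    exact hVclopen b
  have hWT : W ∩ T' = ∅ := by
    rw [hW]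
    apply Set.eq_empty_iff_forall_notMem.2
    rintro x ⟨hxW, hxT⟩
    rcases Set.mem_iUnion₂.1 hxW with ⟨b, -, hxV⟩
    have : x ∈ V b ∩ T' := ⟨hxV, hxT⟩
    rw [hVT b] at this
    exact this
  refine ⟨Subtype.val '' W, Subtype.val '' Wᶜ, ?_, ?_, ?_, ?_, ?_, ?_⟩
  · exact (hWclopen.isClosed.isCompact).image continuous_subtype_val
  · exact (hWclopen.compl.isClosed.isCompact).image continuous_subtype_val
  · rw [← Set.image_union, Set.union_compl_self, Set.image_univ,
      Subtype.range_coe_subtype]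
    rfl
  · rw [Set.disjoint_iff_inter_eq_empty]
    apply Set.eq_empty_iff_forall_notMem.2
    rintro x ⟨⟨x1, hx1, rfl⟩, ⟨x2, hx2, hx12⟩⟩
    have : x2 = x1 := Subtype.val_injective hx12
    subst this
    exact hx2 hx1
  · intro x hx
    exact ⟨⟨x, hBZ hx⟩, hsbcov (show (⟨x, hBZ hx⟩ : Z) ∈ B' from hx), rfl⟩
  · intro x hx
    refine ⟨⟨x, hTZ hx⟩, ?_, rfl⟩
    intro hcW
    have : (⟨x, hTZ hx⟩ : Z) ∈ W ∩ T' := ⟨hcW, hx⟩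
    rw [hWT] at this
    exact this

end Separation


section Final

open Metric

lemma face_closed (n : ℕ) (i : Fin n) (v : ℝ) : IsClosed (face n i v) := by
  have : face n i v = unitCube n ∩ {x : Fin n → ℝ | x i = v} := rfl
  rw [this]
  exact isClosed_Icc.inter (isClosed_eq (continuous_apply i) continuous_const)

end Final
end PM

open Metric in
theorem stmt19 {n : ℕ} (hn : 1 ≤ n) (f : (Fin (n + 1) → ℝ) → (Fin n → ℝ))
    (hf : ContinuousOn f (unitCube (n + 1)))
    (hminus : ∀ i : Fin n, ∀ x ∈ face (n + 1) i.castSucc 0, 0 ≤ f x i)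
    (hplus : ∀ i : Fin n, ∀ x ∈ face (n + 1) i.castSucc 1, f x i ≤ 0) :
    ∃ W ⊆ {x ∈ unitCube (n + 1) | f x = 0}, IsPreconnected W ∧
      (W ∩ face (n + 1) (Fin.last n) 0).Nonempty ∧
      (W ∩ face (n + 1) (Fin.last n) 1).Nonempty := by
  classical
  by_contra hcon
  set Z : Set (Fin (n+1) → ℝ) := {x ∈ unitCube (n + 1) | f x = 0} with hZdef
  have hZclosed : IsClosed Z := by
    have h1 : Z = unitCube (n+1) ∩ f ⁻¹' {0} := by
      ext x
      simp [hZdef, Set.mem_sep_iff, Set.mem_preimage]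
    rw [h1]
    exact hf.preimage_isClosed_of_isClosed isClosed_Icc isClosed_singleton
  have hZcpt : IsCompact Z := (isCompact_Icc).of_isClosed_subset hZclosed
    (fun x hx => hx.1)
  set B : Set (Fin (n+1) → ℝ) := Z ∩ face (n+1) (Fin.last n) 0 with hBdef
  set T : Set (Fin (n+1) → ℝ) := Z ∩ face (n+1) (Fin.last n) 1 with hTdef
  have hBclosed : IsClosed B := hZclosed.inter (PM.face_closed _ _ _)
  have hTclosed : IsClosed T := hZclosed.inter (PM.face_closed _ _ _)
  have hnosep : ¬ ∃ S ⊆ Z, IsPreconnected S ∧ (S ∩ B).Nonempty ∧ (S ∩ T).Nonempty := by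
    rintro ⟨S, hSZ, hSc, ⟨b, hbS, hbB⟩, ⟨t, htS, htT⟩⟩
    exact hcon ⟨S, hSZ, hSc, ⟨b, hbS, hbB.2⟩, ⟨t, htS, htT.2⟩⟩
  obtain ⟨Z₀, Z₁, hZ₀c, hZ₁c, hunion, hdisj, hBZ₀, hTZ₁⟩ :=
    PM.compact_separation hZcpt hBclosed hTclosed
      (fun x hx => hx.1) (fun x hx => hx.1) hnosep
  -- the auxiliary last coordinate function
  set A0 : Set (Fin (n+1) → ℝ) := Z₀ ∪ face (n+1) (Fin.last n) 0 with hA0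
  set A1 : Set (Fin (n+1) → ℝ) := Z₁ ∪ face (n+1) (Fin.last n) 1 with hA1
  have hA0closed : IsClosed A0 := hZ₀c.isClosed.union (PM.face_closed _ _ _)
  have hA1closed : IsClosed A1 := hZ₁c.isClosed.union (PM.face_closed _ _ _)
  have hA0ne : A0.Nonempty := by
    refine ⟨(0 : Fin (n+1) → ℝ), Or.inr ⟨⟨le_refl _, fun i => zero_le_one⟩, rfl⟩⟩
  have hA1ne : A1.Nonempty := by
    refine ⟨(fun i => if i = Fin.last n then 1 else 0), Or.inr ⟨⟨?_, ?_⟩, ?_⟩⟩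
    · intro i
      dsimp only
      split <;> norm_num
    · intro i
      dsimp only
      split <;> norm_num
    · simp
  set H : (Fin (n+1) → ℝ) → ℝ :=
    fun x => infDist x A1 - infDist x A0 with hHdef
  have hHcont : Continuous H :=
    (continuous_infDist_pt A1).sub (continuous_infDist_pt A0)
  set F : (Fin (n+1) → ℝ) → (Fin (n+1) → ℝ) :=
    fun x => Fin.snoc (f x) (H x) with hFdef
  have hFcont : ContinuousOn F (Set.Icc (0 : Fin (n+1) → ℝ) 1) := by
    rw [continuousOn_pi]
    intro i
    refine Fin.lastCases ?_ ?_ i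
    · have : (fun x => F x (Fin.last n)) = H := by
        funext x
        rw [hFdef]
        simp [Fin.snoc_last]
      rw [this]
      exact hHcont.continuousOn
    · intro i'
      have : (fun x => F x i'.castSucc) = fun x => f x i' := by
        funext x
        rw [hFdef]
        simp [Fin.snoc_castSucc]
      rw [this]
      exact (continuousOn_pi.1 hf) i'
  have hFm : ∀ (i : Fin (n+1)) (x : Fin (n+1) → ℝ),
      x ∈ Set.Icc (0 : Fin (n+1) → ℝ) 1 → x i = 0 → 0 ≤ F x i := by
    intro i
    refine Fin.lastCases ?_ ?_ i
    · intro x hx hx0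
      have : F x (Fin.last n) = H x := by rw [hFdef]; simp [Fin.snoc_last]
      rw [this, hHdef]
      have h0 : infDist x A0 = 0 := infDist_zero_of_mem (Or.inr ⟨hx, hx0⟩)
      simp only [h0, sub_zero]
      exact infDist_nonneg
    · intro i' x hx hx0
      have : F x i'.castSucc = f x i' := by rw [hFdef]; simp [Fin.snoc_castSucc]
      rw [this]
      exact hminus i' x ⟨hx, hx0⟩
  have hFp : ∀ (i : Fin (n+1)) (x : Fin (n+1) → ℝ),
      x ∈ Set.Icc (0 : Fin (n+1) → ℝ) 1 → x i = 1 → F x i ≤ 0 := by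
    intro i
    refine Fin.lastCases ?_ ?_ i
    · intro x hx hx1
      have : F x (Fin.last n) = H x := by rw [hFdef]; simp [Fin.snoc_last]
      rw [this, hHdef]
      have h1 : infDist x A1 = 0 := infDist_zero_of_mem (Or.inr ⟨hx, hx1⟩)
      simp only [h1, zero_sub, neg_nonpos]
      exact infDist_nonneg
    · intro i' x hx hx1
      have : F x i'.castSucc = f x i' := by rw [hFdef]; simp [Fin.snoc_castSucc]
      rw [this]
      exact hplus i' x ⟨hx, hx1⟩
  obtain ⟨x, hx, hFx⟩ := PM.poincare_miranda F hFcont hFm hFp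
  have hfx : f x = 0 := by
    funext i
    have := congrFun hFx i.castSucc
    rw [hFdef] at this
    simpa [Fin.snoc_castSucc] using this
  have hHx : H x = 0 := by
    have := congrFun hFx (Fin.last n)
    rw [hFdef] at this
    simpa [Fin.snoc_last] using this
  have hxZ : x ∈ Z := ⟨hx, hfx⟩
  rw [hunion] at hxZ
  have hinA1 : infDist x A1 = 0 → x ∈ A1 := fun h =>
    (hA1closed.mem_iff_infDist_zero hA1ne).2 h
  have hinA0 : infDist x A0 = 0 → x ∈ A0 := fun h =>
    (hA0closed.mem_iff_infDist_zero hA0ne).2 h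
  rcases hxZ with hx0 | hx1
  · -- x ∈ Z₀ : distance to A0 is zero, hence to A1, hence x ∈ Z₁ or top face
    have hd0 : infDist x A0 = 0 := infDist_zero_of_mem (Or.inl hx0)
    have hd1 : infDist x A1 = 0 := by
      rw [hHdef] at hHx
      simp only [hd0, sub_zero] at hHx
      exact hHx
    rcases hinA1 hd1 with hxZ1 | hxface
    · exact (Set.disjoint_left.1 hdisj hx0) hxZ1
    · have hxT : x ∈ T := ⟨⟨hx, hfx⟩, hxface⟩
      exact (Set.disjoint_left.1 hdisj hx0) (hTZ₁ hxT)
  · have hd1 : infDist x A1 = 0 := infDist_zero_of_mem (Or.inl hx1)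
    have hd0 : infDist x A0 = 0 := by
      rw [hHdef] at hHx
      simp only [hd1, zero_sub, neg_eq_zero] at hHx
      exact hHx
    rcases hinA0 hd0 with hxZ0 | hxface
    · exact (Set.disjoint_left.1 hdisj hxZ0) hx1
    · have hxB : x ∈ B := ⟨⟨hx, hfx⟩, hxface⟩
      exact (Set.disjoint_left.1 hdisj (hBZ₀ hxB)) hx1
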